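/- Let G be a map sending continuous functions [0,∞) → ℝ to continuous functions [0,∞) → ℝ such that G(x)(0) ≥ 0 for all x and such that for every T > 0 there exists a constant C_T with sup_{0≤s≤t} |G(x)(s) − G(y)(s)| ≤ C_T ∫₀ᵗ |x(u) − y(u)| du for all continuous x, y and all 0 ≤ t ≤ T. Then there exists a unique pair (X, R) of continuous functions on [0,∞) that is a solution of the generalized Skorokhod problem associated with G. -/

import Mathlib

open Real Set intervalIntegral

/-- A pair `(x, r)` of continuous functions on `[0,∞)` is a solution of the Skorokhod
problem associated with `z` if `x = z + r`, `x ≥ 0`, `r` is nondecreasing with `r 0 = 0`,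
and `r` increases only at times where `x` vanishes. -/
def IsSkorokhodSolution (z x r : ℝ → ℝ) : Prop :=
  ContinuousOn x (Set.Ici 0) ∧ ContinuousOn r (Set.Ici 0) ∧
  (∀ t, 0 ≤ t → x t = z t + r t) ∧
  (∀ t, 0 ≤ t → 0 ≤ x t) ∧
  MonotoneOn r (Set.Ici 0) ∧ r 0 = 0 ∧
  (∀ s t, 0 ≤ s → s ≤ t → (∀ u, u ∈ Set.Icc s t → 0 < x u) → r s = r t)

/-- A pair `(x, r)` is a solution of the generalized Skorokhod problem associated with a
functional `G` if it is a solution of the Skorokhod problem associated with `G x`. -/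
def IsGSPSolution (G : (ℝ → ℝ) → (ℝ → ℝ)) (x r : ℝ → ℝ) : Prop :=
  IsSkorokhodSolution (G x) x r


noncomputable def runSup (z : ℝ → ℝ) (t : ℝ) : ℝ :=
  sSup ((fun s => max 0 (-z s)) '' Set.Icc 0 t)

section runSup

variable {z : ℝ → ℝ}

lemma contOn_pospart (hz : ContinuousOn z (Set.Ici 0)) :
    ContinuousOn (fun s => max 0 (-z s)) (Set.Ici 0) :=
  ContinuousOn.sup continuousOn_const hz.neg

lemma runSup_bddAbove (hz : ContinuousOn z (Set.Ici 0)) {t : ℝ} (ht : 0 ≤ t) :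
    BddAbove ((fun s => max 0 (-z s)) '' Set.Icc 0 t) :=
  (isCompact_Icc.image_of_continuousOn
    ((contOn_pospart hz).mono (Set.Icc_subset_Ici_self))).bddAbove

lemma le_runSup (hz : ContinuousOn z (Set.Ici 0)) {s t : ℝ} (hs : s ∈ Set.Icc 0 t) :
    max 0 (-z s) ≤ runSup z t :=
  le_csSup (runSup_bddAbove hz (hs.1.trans hs.2)) (Set.mem_image_of_mem _ hs)

lemma runSup_nonneg (hz : ContinuousOn z (Set.Ici 0)) {t : ℝ} (ht : 0 ≤ t) :
    0 ≤ runSup z t :=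
  le_trans (le_max_left _ _) (le_runSup hz ⟨le_refl 0, ht⟩)

lemma runSup_mono (hz : ContinuousOn z (Set.Ici 0)) {s t : ℝ} (hs : 0 ≤ s) (hst : s ≤ t) :
    runSup z s ≤ runSup z t :=
  csSup_le_csSup (runSup_bddAbove hz (hs.trans hst))
    (Set.Nonempty.image _ ⟨0, le_refl 0, hs⟩)
    (Set.image_mono (Set.Icc_subset_Icc_right hst))

lemma runSup_le_of_forall (hz : ContinuousOn z (Set.Ici 0)) {t a : ℝ} (ht : 0 ≤ t)
    (h : ∀ u ∈ Set.Icc (0:ℝ) t, max 0 (-z u) ≤ a) : runSup z t ≤ a :=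
  csSup_le (Set.Nonempty.image _ ⟨0, le_refl 0, ht⟩) (by rintro y ⟨u, hu, rfl⟩; exact h u hu)

lemma runSup_zero (hz0 : 0 ≤ z 0) : runSup z 0 = 0 := by
  simp [runSup, Set.Icc_self, max_eq_left (neg_nonpos.2 hz0)]

lemma runSup_exists_max (hz : ContinuousOn z (Set.Ici 0)) {t : ℝ} (ht : 0 ≤ t) :
    ∃ u ∈ Set.Icc (0:ℝ) t, runSup z t = max 0 (-z u) := by
  obtain ⟨u, hu, hmax⟩ := isCompact_Icc.exists_isMaxOn ⟨0, le_refl 0, ht⟩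
    ((contOn_pospart hz).mono (Set.Icc_subset_Ici_self))
  exact ⟨u, hu, le_antisymm (runSup_le_of_forall hz ht (fun v hv => hmax hv)) (le_runSup hz hu)⟩

lemma sk_nonneg (hz : ContinuousOn z (Set.Ici 0)) {t : ℝ} (ht : 0 ≤ t) :
    0 ≤ z t + runSup z t := by
  have h := le_trans (le_max_right 0 (-z t)) (le_runSup hz ⟨ht, le_refl t⟩)
  linarith

lemma runSup_congr {z' : ℝ → ℝ} {t : ℝ} (h : ∀ u ∈ Set.Icc (0:ℝ) t, z u = z' u) :
    runSup z t = runSup z' t := by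
  unfold runSup
  congr 1
  apply Set.image_congr
  intro u hu; rw [h u hu]

lemma runSup_dist_le (hz : ContinuousOn z (Set.Ici 0)) {z' : ℝ → ℝ}
    (hz' : ContinuousOn z' (Set.Ici 0)) {t ε : ℝ} (ht : 0 ≤ t)
    (h : ∀ u ∈ Set.Icc (0:ℝ) t, |z u - z' u| ≤ ε) :
    |runSup z t - runSup z' t| ≤ ε := by
  have hε : 0 ≤ ε := le_trans (abs_nonneg _) (h 0 ⟨le_refl 0, ht⟩)
  have key : ∀ (w w' : ℝ → ℝ), ContinuousOn w (Set.Ici 0) → ContinuousOn w' (Set.Ici 0) →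
      (∀ u ∈ Set.Icc (0:ℝ) t, |w u - w' u| ≤ ε) → runSup w t ≤ runSup w' t + ε := by
    intro w w' hw hw' hb
    apply runSup_le_of_forall hw ht
    intro u hu
    have h1 : -w u ≤ -w' u + ε := by
      have := abs_le.mp (hb u hu); linarith [this.1]
    calc max 0 (-w u) ≤ max 0 (-w' u) + ε := by
          rcases le_total (-w u) 0 with h' | h'
          · simpa [max_eq_left h'] using add_nonneg (le_max_left 0 (-w' u)) hε
          · rw [max_eq_right h']
            exact le_trans h1 (add_le_add_left (le_max_right _ _) ε)
      _ ≤ runSup w' t + ε := add_le_add_left (le_runSup hw' hu) ε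
  have h1 := key z z' hz hz' h
  have h2 := key z' z hz' hz (fun u hu => by rw [abs_sub_comm]; exact h u hu)
  rw [abs_le]; constructor <;> linarith

end runSup

lemma runSup_continuousOn {z : ℝ → ℝ} (hz : ContinuousOn z (Set.Ici 0)) :
    ContinuousOn (runSup z) (Set.Ici 0) := by
  intro t₀ ht₀
  simp only [Set.mem_Ici] at ht₀
  rw [Metric.continuousWithinAt_iff]
  intro ε hε
  -- uniform continuity of pospart on [0, t₀+1]
  have hcomp : IsCompact (Set.Icc (0:ℝ) (t₀+1)) := isCompact_Icc
  have hucont : UniformContinuousOn (fun s => max 0 (-z s)) (Set.Icc 0 (t₀+1)) :=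
    hcomp.uniformContinuousOn_of_continuous
      ((contOn_pospart hz).mono Set.Icc_subset_Ici_self)
  rw [Metric.uniformContinuousOn_iff] at hucont
  obtain ⟨δ, hδ, hδ'⟩ := hucont (ε/2) (by linarith)
  refine ⟨min δ 1, by positivity, ?_⟩
  intro t ht hdist
  simp only [Set.mem_Ici] at ht
  rw [Real.dist_eq] at hdist ⊢
  -- key: for 0 ≤ a ≤ b within window, runSup z b ≤ runSup z a + ε/2
  have key : ∀ a b : ℝ, 0 ≤ a → a ≤ b → b ≤ t₀ + 1 → b - a < δ →
      runSup z b ≤ runSup z a + ε/2 := by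
    intro a b ha hab hb hd
    apply runSup_le_of_forall hz (ha.trans hab)
    intro u hu
    rcases le_total u a with h' | h'
    · exact le_trans (le_runSup hz ⟨hu.1, h'⟩)
        (le_add_of_nonneg_right (by linarith))
    · have hua : dist u a < δ := by
        rw [Real.dist_eq, abs_of_nonneg (by linarith)]; linarith [hu.2]
      have := hδ' u ⟨hu.1, hu.2.trans hb⟩ a ⟨ha, by linarith⟩ hua
      rw [Real.dist_eq] at this
      have h2 := (abs_le.mp (le_of_lt this)).2
      have h3 : max 0 (-z a) ≤ runSup z a := le_runSup hz ⟨ha, le_refl a⟩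
      linarith
  have habs : |t - t₀| < δ := lt_of_lt_of_le hdist (min_le_left _ _)
  have ht1 : t ≤ t₀ + 1 := by
    have := (abs_le.mp (le_of_lt (lt_of_lt_of_le hdist (min_le_right _ _)))).2; linarith
  obtain ⟨hl, hr⟩ := abs_lt.mp habs
  rcases le_total t t₀ with h | h
  · have h1 := key t t₀ ht h (by linarith) (by linarith)
    have h2 := runSup_mono hz ht h
    rw [abs_of_nonpos (by linarith)]; linarith
  · have h1 := key t₀ t ht₀ h ht1 (by linarith)
    have h2 := runSup_mono hz ht₀ h
    rw [abs_of_nonneg (by linarith)]; linarith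

lemma sk_isSolution {z : ℝ → ℝ} (hz : ContinuousOn z (Set.Ici 0)) (hz0 : 0 ≤ z 0) :
    IsSkorokhodSolution z (fun t => z t + runSup z t) (runSup z) := by
  refine ⟨hz.add (runSup_continuousOn hz), runSup_continuousOn hz,
    fun t ht => rfl, fun t ht => sk_nonneg hz ht,
    fun s hs t ht hst => runSup_mono hz hs hst, runSup_zero hz0, ?_⟩
  intro s t hs hst hpos
  refine le_antisymm (runSup_mono hz hs hst) ?_
  by_contra hlt
  push_neg at hlt
  obtain ⟨u, hu, hmax⟩ := runSup_exists_max hz (hs.trans hst)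
  have hus : s < u := by
    by_contra h
    push_neg at h
    exact absurd (hmax ▸ le_runSup hz ⟨hu.1, h⟩) (not_le.mpr hlt)
  have huIcc : u ∈ Set.Icc s t := ⟨le_of_lt hus, hu.2⟩
  have hxu : 0 < z u + runSup z u := hpos u huIcc
  have hru : runSup z u = runSup z t := le_antisymm (runSup_mono hz hu.1 hu.2)
    (hmax ▸ le_runSup hz ⟨hu.1, le_refl u⟩)
  have hpos' : 0 < max 0 (-z u) := by
    rw [← hmax]
    exact lt_of_le_of_lt (runSup_nonneg hz hs) hlt
  have hzneg : max 0 (-z u) = -z u := by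
    rcases max_cases 0 (-z u) with ⟨h1, h2⟩ | ⟨h1, h2⟩
    · exact absurd (h1 ▸ hpos') (lt_irrefl 0)
    · exact h1
  have : z u + runSup z u = 0 := by rw [hru, hmax, hzneg]; ring
  linarith

lemma skorokhod_unique {z x r : ℝ → ℝ} (hz : ContinuousOn z (Set.Ici 0))
    (hsol : IsSkorokhodSolution z x r) {t : ℝ} (ht : 0 ≤ t) : r t = runSup z t := by
  obtain ⟨hx, hr, hxzr, hxnn, hrmono, hr0, hcompl⟩ := hsol
  have hrnn : ∀ s, 0 ≤ s → 0 ≤ r s := fun s hs => hr0 ▸ hrmono (le_refl (0:ℝ)) hs hs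
  -- lower bound: runSup z t ≤ r t
  have hlow : runSup z t ≤ r t := by
    apply runSup_le_of_forall hz ht
    intro u hu
    have h1 : -z u ≤ r u := by have := hxnn u hu.1; have := hxzr u hu.1; linarith
    have h2 : r u ≤ r t := hrmono hu.1 ht hu.2
    exact max_le (le_trans (hrnn u hu.1) h2) (le_trans h1 h2)
  refine le_antisymm ?_ hlow
  -- upper bound
  set A := {s ∈ Set.Icc (0:ℝ) t | x s = 0} with hA
  by_cases hAe : A.Nonempty
  · have hAcl : IsClosed A := by
      have : A = Set.Icc 0 t ∩ x ⁻¹' {0} := by ext s; simp [hA, Set.mem_sep_iff]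
      rw [this]
      exact (hx.mono Set.Icc_subset_Ici_self).preimage_isClosed_of_isClosed
        isClosed_Icc isClosed_singleton
    have hAc : IsCompact A :=
      IsCompact.of_isClosed_subset isCompact_Icc hAcl (Set.sep_subset _ _)
    set s₀ := sSup A with hs₀
    have hs₀A : s₀ ∈ A := hAc.sSup_mem hAe
    obtain ⟨hs₀Icc, hxs₀⟩ := hs₀A
    -- r s₀ = r t
    have hrst : r s₀ = r t := by
      rcases eq_or_lt_of_le hs₀Icc.2 with h | h
      · rw [h]
      · -- for s'' ∈ Ioc s₀ t, r s'' = r t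
        have hconst : ∀ s'' ∈ Set.Ioc s₀ t, r s'' = r t := by
          intro s'' hs''
          apply hcompl s'' t (le_trans hs₀Icc.1 (le_of_lt hs''.1)) hs''.2
          intro u hu
          rcases lt_or_eq_of_le (hxnn u (le_trans hs₀Icc.1 (le_of_lt (lt_of_lt_of_le hs''.1 hu.1)))) with h' | h'
          · exact h'
          · exfalso
            have huA : u ∈ A := ⟨⟨le_trans hs₀Icc.1 (le_of_lt (lt_of_lt_of_le hs''.1 hu.1)), hu.2⟩, h'.symm⟩
            have := le_csSup hAc.bddAbove huA
            rw [← hs₀] at this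
            have : s₀ < u := lt_of_lt_of_le hs''.1 hu.1
            linarith [le_csSup hAc.bddAbove huA]
        -- take limit s'' → s₀⁺
        have hne : (nhdsWithin s₀ (Set.Ioc s₀ t)).NeBot := by
          rw [← mem_closure_iff_nhdsWithin_neBot, closure_Ioc (ne_of_lt h)]
          exact ⟨le_refl s₀, le_of_lt h⟩
        have h1 : Filter.Tendsto r (nhdsWithin s₀ (Set.Ioc s₀ t)) (nhds (r s₀)) := by
          have hsub : Set.Ioc s₀ t ⊆ Set.Ici 0 := fun u hu =>
            le_trans hs₀Icc.1 (le_of_lt hu.1)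
          exact ((hr s₀ hs₀Icc.1).mono hsub).tendsto
        have h2 : Filter.Tendsto r (nhdsWithin s₀ (Set.Ioc s₀ t)) (nhds (r t)) := by
          apply Filter.Tendsto.congr' _ tendsto_const_nhds
          filter_upwards [self_mem_nhdsWithin] with u hu
          exact (hconst u hu).symm
        exact tendsto_nhds_unique h1 h2
    have : r t = -z s₀ := by
      have := hxzr s₀ hs₀Icc.1
      rw [hxs₀] at this
      linarith [hrst]
    rw [this]
    exact le_trans (le_max_right 0 (-z s₀)) (le_runSup hz hs₀Icc)
  · -- no zeros: x > 0 on [0,t], so r t = r 0 = 0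
    have hpos : ∀ u, u ∈ Set.Icc (0:ℝ) t → 0 < x u := by
      intro u hu
      rcases lt_or_eq_of_le (hxnn u hu.1) with h | h
      · exact h
      · exact absurd ⟨hu, h.symm⟩ (fun hmem => hAe ⟨u, hmem⟩)
    have := hcompl 0 t (le_refl 0) ht hpos
    rw [← this, hr0]
    exact runSup_nonneg hz ht

lemma gronwall_zero {f : ℝ → ℝ} {T K : ℝ} (hT : 0 ≤ T) (hK : 0 ≤ K)
    (hf : ContinuousOn f (Set.Icc 0 T)) (hnn : ∀ s ∈ Set.Icc (0:ℝ) T, 0 ≤ f s)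
    (hineq : ∀ s ∈ Set.Icc (0:ℝ) T, f s ≤ K * ∫ u in (0:ℝ)..s, f u) :
    ∀ s ∈ Set.Icc (0:ℝ) T, f s = 0 := by
  obtain ⟨M, hM⟩ := isCompact_Icc.exists_bound_of_continuousOn hf
  have hM' : ∀ s ∈ Set.Icc (0:ℝ) T, f s ≤ M := fun s hs =>
    le_trans (le_abs_self _) (hM s hs)
  have hMnn : 0 ≤ M := le_trans (hnn 0 ⟨le_refl 0, hT⟩) (hM' 0 ⟨le_refl 0, hT⟩)
  have key : ∀ n : ℕ, ∀ s ∈ Set.Icc (0:ℝ) T, f s ≤ M * (K * s) ^ n / n.factorial := by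
    intro n
    induction n with
    | zero => intro s hs; simpa using hM' s hs
    | succ n ih =>
      intro s hs
      have hint : IntervalIntegrable f MeasureTheory.volume 0 s := by
        apply ContinuousOn.intervalIntegrable
        rw [Set.uIcc_of_le hs.1]
        exact hf.mono (Set.Icc_subset_Icc_right hs.2)
      have hint2 : IntervalIntegrable (fun u => M * (K * u) ^ n / n.factorial)
          MeasureTheory.volume 0 s := by
        apply Continuous.intervalIntegrable
        continuity
      have h1 : (∫ u in (0:ℝ)..s, f u) ≤ ∫ u in (0:ℝ)..s, M * (K * u) ^ n / n.factorial := by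
        apply intervalIntegral.integral_mono_on hs.1 hint hint2
        intro u hu
        exact ih u ⟨hu.1, hu.2.trans hs.2⟩
      have h2 : (∫ u in (0:ℝ)..s, M * (K * u) ^ n / n.factorial)
          = M * K ^ n / n.factorial * (s ^ (n+1) / (n+1)) := by
        have : ∀ u : ℝ, M * (K * u) ^ n / n.factorial
            = (M * K ^ n / n.factorial) * u ^ n := by
          intro u; rw [mul_pow]; ring
        simp_rw [this]
        rw [intervalIntegral.integral_const_mul, integral_pow]
        ring
      calc f s ≤ K * ∫ u in (0:ℝ)..s, f u := hineq s hs
        _ ≤ K * (M * K ^ n / n.factorial * (s ^ (n+1) / (n+1))) := by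
            rw [← h2]; exact mul_le_mul_of_nonneg_left h1 hK
        _ = M * (K * s) ^ (n+1) / (n+1).factorial := by
            rw [mul_pow, Nat.factorial_succ]
            push_cast
            field_simp
            ring
  intro s hs
  refine le_antisymm ?_ (hnn s hs)
  have hlim : Filter.Tendsto (fun n : ℕ => M * (K * s) ^ n / n.factorial)
      Filter.atTop (nhds 0) := by
    have := FloorSemiring.tendsto_pow_div_factorial_atTop (K := ℝ) (K * s)
    have h := this.const_mul M
    simpa [mul_div_assoc] using h
  exact ge_of_tendsto hlim (Filter.Eventually.of_forall (fun n => key n s hs))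


lemma sol_congr {z x x' r : ℝ → ℝ} (h : IsSkorokhodSolution z x r)
    (he : ∀ t, 0 ≤ t → x' t = x t) : IsSkorokhodSolution z x' r := by
  obtain ⟨hx, hr, hxzr, hxnn, hrmono, hr0, hcompl⟩ := h
  refine ⟨hx.congr (fun t ht => he t ht), hr,
    fun t ht => (he t ht).trans (hxzr t ht),
    fun t ht => (he t ht) ▸ hxnn t ht, hrmono, hr0, ?_⟩
  intro s t hs hst hpos
  apply hcompl s t hs hst
  intro u hu
  rw [← he u (hs.trans hu.1)]
  exact hpos u hu

noncomputable def xseq (G : (ℝ → ℝ) → (ℝ → ℝ)) : ℕ → ℝ → ℝ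
  | 0 => fun _ => 0
  | n+1 => fun t => G (xseq G n) t + runSup (G (xseq G n)) t

noncomputable def Xlim (G : (ℝ → ℝ) → (ℝ → ℝ)) : ℝ → ℝ :=
  fun t => Filter.limUnder Filter.atTop (fun n => xseq G n t)

section existence

variable {G : (ℝ → ℝ) → (ℝ → ℝ)}
  (hGcont : ∀ x : ℝ → ℝ, ContinuousOn x (Set.Ici 0) → ContinuousOn (G x) (Set.Ici 0))
  (hGlip : ∀ T : ℝ, 0 < T → ∃ C : ℝ,
      ∀ x y : ℝ → ℝ, ContinuousOn x (Set.Ici 0) → ContinuousOn y (Set.Ici 0) →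
        ∀ t, 0 ≤ t → t ≤ T → ∀ s ∈ Set.Icc (0:ℝ) t,
          |G x s - G y s| ≤ C * ∫ u in (0:ℝ)..t, |x u - y u|)

include hGcont in
lemma xseq_contOn : ∀ n, ContinuousOn (xseq G n) (Set.Ici 0) := by
  intro n
  induction n with
  | zero => exact continuousOn_const
  | succ n ih =>
    exact (hGcont _ ih).add (runSup_continuousOn (hGcont _ ih))

include hGlip in
lemma hGlip' : ∀ T : ℝ, 0 < T → ∃ C : ℝ, 0 ≤ C ∧
    ∀ x y : ℝ → ℝ, ContinuousOn x (Set.Ici 0) → ContinuousOn y (Set.Ici 0) →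
      ∀ t, 0 ≤ t → t ≤ T → ∀ s ∈ Set.Icc (0:ℝ) t,
        |G x s - G y s| ≤ C * ∫ u in (0:ℝ)..t, |x u - y u| := by
  intro T hT
  obtain ⟨C, hC⟩ := hGlip T hT
  refine ⟨max C 0, le_max_right C 0, ?_⟩
  intro x y hx hy t ht htT s hs
  refine le_trans (hC x y hx hy t ht htT s hs) ?_
  apply mul_le_mul_of_nonneg_right (le_max_left C 0)
  exact intervalIntegral.integral_nonneg ht (fun u _ => abs_nonneg _)

include hGcont hGlip in
lemma key_est {T : ℝ} (hT : 0 < T) : ∃ M K : ℝ, 0 ≤ M ∧ 0 ≤ K ∧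
    ∀ n : ℕ, ∀ s ∈ Set.Icc (0:ℝ) T,
      |xseq G (n+1) s - xseq G n s| ≤ M * (K * s) ^ n / n.factorial := by
  obtain ⟨C, hC0, hC⟩ := hGlip' hGlip T hT
  obtain ⟨M₀, hM₀⟩ := isCompact_Icc.exists_bound_of_continuousOn
    ((xseq_contOn hGcont 1).mono (Set.Icc_subset_Ici_self : Set.Icc (0:ℝ) T ⊆ Set.Ici 0))
  refine ⟨max M₀ 0, 2 * C, le_max_right _ _, by positivity, ?_⟩
  intro n
  induction n with
  | zero =>
    intro s hs
    simp only [pow_zero, Nat.factorial_zero, Nat.cast_one, mul_one, div_one]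
    have : xseq G 0 s = 0 := rfl
    rw [this, sub_zero]
    exact le_trans (hM₀ s hs) (le_max_left _ _)
  | succ n ih =>
    intro s hs
    have hs0 := hs.1
    have hcont1 := xseq_contOn hGcont (n+1)
    have hcont0 := xseq_contOn hGcont n
    have hGc1 := hGcont _ hcont1
    have hGc0 := hGcont _ hcont0
    -- integrability of the difference
    have hint : IntervalIntegrable (fun u => |xseq G (n+1) u - xseq G n u|)
        MeasureTheory.volume 0 s := by
      apply ContinuousOn.intervalIntegrable
      rw [Set.uIcc_of_le hs0]
      exact ((hcont1.sub hcont0).abs).mono (Set.Icc_subset_Ici_self)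
    have hint2 : IntervalIntegrable (fun u => max M₀ 0 * (2 * C * u) ^ n / n.factorial)
        MeasureTheory.volume 0 s := by
      apply Continuous.intervalIntegrable; continuity
    have hIle : (∫ u in (0:ℝ)..s, |xseq G (n+1) u - xseq G n u|)
        ≤ ∫ u in (0:ℝ)..s, max M₀ 0 * (2 * C * u) ^ n / n.factorial := by
      apply intervalIntegral.integral_mono_on hs0 hint hint2
      intro u hu
      exact ih u ⟨hu.1, hu.2.trans hs.2⟩
    have hIval : (∫ u in (0:ℝ)..s, max M₀ 0 * (2 * C * u) ^ n / n.factorial)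
        = max M₀ 0 * (2 * C) ^ n / n.factorial * (s ^ (n+1) / (n+1)) := by
      have : ∀ u : ℝ, max M₀ 0 * (2 * C * u) ^ n / n.factorial
          = (max M₀ 0 * (2 * C) ^ n / n.factorial) * u ^ n := by
        intro u; rw [mul_pow]; ring
      simp_rw [this]
      rw [intervalIntegral.integral_const_mul, integral_pow]
      ring
    -- the two pointwise bounds
    have hG : ∀ u ∈ Set.Icc (0:ℝ) s, |G (xseq G (n+1)) u - G (xseq G n) u|
        ≤ C * ∫ v in (0:ℝ)..s, |xseq G (n+1) v - xseq G n v| :=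
      fun u hu => hC _ _ hcont1 hcont0 s hs0 hs.2 u hu
    have hR : |runSup (G (xseq G (n+1))) s - runSup (G (xseq G n)) s|
        ≤ C * ∫ v in (0:ℝ)..s, |xseq G (n+1) v - xseq G n v| :=
      runSup_dist_le hGc1 hGc0 hs0 hG
    have hGs := hG s ⟨hs0, le_refl s⟩
    have hsum : |xseq G (n+2) s - xseq G (n+1) s|
        ≤ 2 * (C * ∫ v in (0:ℝ)..s, |xseq G (n+1) v - xseq G n v|) := by
      have e1 : xseq G (n+2) s = G (xseq G (n+1)) s + runSup (G (xseq G (n+1))) s := rfl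
      have e2 : xseq G (n+1) s = G (xseq G n) s + runSup (G (xseq G n)) s := rfl
      rw [e1, e2]
      have : G (xseq G (n+1)) s + runSup (G (xseq G (n+1))) s
          - (G (xseq G n) s + runSup (G (xseq G n)) s)
          = (G (xseq G (n+1)) s - G (xseq G n) s)
            + (runSup (G (xseq G (n+1))) s - runSup (G (xseq G n)) s) := by ring
      rw [this]
      calc |_ + _| ≤ |G (xseq G (n+1)) s - G (xseq G n) s|
            + |runSup (G (xseq G (n+1))) s - runSup (G (xseq G n)) s| := abs_add_le _ _
        _ ≤ _ := by linarith
    calc |xseq G (n+2) s - xseq G (n+1) s|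
        ≤ 2 * (C * ∫ v in (0:ℝ)..s, |xseq G (n+1) v - xseq G n v|) := hsum
      _ ≤ 2 * (C * (max M₀ 0 * (2 * C) ^ n / n.factorial * (s ^ (n+1) / (n+1)))) := by
          rw [← hIval]
          apply mul_le_mul_of_nonneg_left (mul_le_mul_of_nonneg_left hIle hC0) (by norm_num)
      _ = max M₀ 0 * (2 * C * s) ^ (n+1) / (n+1).factorial := by
          rw [mul_pow, Nat.factorial_succ]
          push_cast
          have hnn : ((n:ℝ) + 1) ≠ 0 := by positivity
          have hfn : ((n.factorial :ℝ)) ≠ 0 := by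
            exact_mod_cast Nat.cast_ne_zero.mpr n.factorial_ne_zero
          field_simp
          ring

include hGcont hGlip in
lemma xseq_conv : ∀ t : ℝ, 0 ≤ t →
    Filter.Tendsto (fun n => xseq G n t) Filter.atTop (nhds (Xlim G t)) := by
  intro t ht
  have hT : (0:ℝ) < t + 1 := by linarith
  obtain ⟨M, K, hM, hK, hest⟩ := key_est hGcont hGlip hT
  have hc : CauchySeq (fun n => xseq G n t) := by
    apply cauchySeq_of_dist_le_of_summable (fun n => M * (K * (t+1)) ^ n / n.factorial)
    · intro n
      rw [Real.dist_eq]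
      have h1 := hest n t ⟨ht, by linarith⟩
      rw [abs_sub_comm] at h1
      refine le_trans h1 ?_
      have hKs : K * t ≤ K * (t+1) := by nlinarith
      gcongr

    · simpa [mul_div_assoc] using (Real.summable_pow_div_factorial (K * (t+1))).mul_left M
  obtain ⟨l, hl⟩ := cauchySeq_tendsto_of_complete hc
  rw [Xlim, hl.limUnder_eq]
  exact hl

include hGcont hGlip in
lemma xseq_unif {T : ℝ} (hT : 0 < T) : ∃ b : ℕ → ℝ,
    Filter.Tendsto b Filter.atTop (nhds 0) ∧
    ∀ n : ℕ, ∀ s ∈ Set.Icc (0:ℝ) T, dist (xseq G n s) (Xlim G s) ≤ b n := by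
  obtain ⟨M, K, hM, hK, hest⟩ := key_est hGcont hGlip hT
  set a : ℕ → ℝ := fun n => M * (K * T) ^ n / n.factorial with ha
  have hsa : Summable a := by
    simpa [ha, mul_div_assoc] using (Real.summable_pow_div_factorial (K * T)).mul_left M
  refine ⟨fun n => ∑' m, a (n + m), ?_, ?_⟩
  · have := tendsto_sum_nat_add a
    refine this.congr (fun i => tsum_congr (fun k => by rw [add_comm]))
  · intro n s hs
    apply dist_le_tsum_of_dist_le_of_tendsto a _ hsa (xseq_conv hGcont hGlip s hs.1)
    intro m
    rw [Real.dist_eq]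
    have h1 := hest m s hs
    rw [abs_sub_comm] at h1
    refine le_trans h1 ?_
    have hKs : K * s ≤ K * T := mul_le_mul_of_nonneg_left hs.2 hK
    show M * (K * s) ^ m / m.factorial ≤ M * (K * T) ^ m / m.factorial
    have : 0 ≤ K * s := mul_nonneg hK hs.1
    gcongr

include hGcont hGlip in
lemma xlim_contOn : ContinuousOn (Xlim G) (Set.Ici 0) := by
  intro t ht
  simp only [Set.mem_Ici] at ht
  have hT : (0:ℝ) < t + 1 := by linarith
  obtain ⟨b, hb0, hb⟩ := xseq_unif hGcont hGlip hT
  have hunif : TendstoUniformlyOn (fun n => xseq G n) (Xlim G) Filter.atTop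
      (Set.Icc 0 (t+1)) := by
    rw [Metric.tendstoUniformlyOn_iff]
    intro ε hε
    filter_upwards [hb0.eventually_lt_const hε] with n hn s hs
    rw [dist_comm]
    exact lt_of_le_of_lt (hb n s hs) hn
  have hcont : ContinuousOn (Xlim G) (Set.Icc 0 (t+1)) :=
    hunif.continuousOn (Filter.Eventually.of_forall
      (fun n => (xseq_contOn hGcont n).mono Set.Icc_subset_Ici_self)).frequently
  have h1 := hcont t ⟨ht, by linarith⟩
  apply h1.mono_of_mem_nhdsWithin
  rw [show Set.Icc (0:ℝ) (t+1) = Set.Ici 0 ∩ Set.Iic (t+1) from (Set.Ici_inter_Iic).symm]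
  exact Filter.inter_mem self_mem_nhdsWithin
    (mem_nhdsWithin_of_mem_nhds (Iic_mem_nhds (by linarith)))

include hGcont hGlip in
lemma xlim_fixed : ∀ t : ℝ, 0 ≤ t →
    Xlim G t = G (Xlim G) t + runSup (G (Xlim G)) t := by
  intro t ht
  have hT : (0:ℝ) < t + 1 := by linarith
  obtain ⟨C, hC0, hC⟩ := hGlip' hGlip (t+1) hT
  obtain ⟨b, hb0, hb⟩ := xseq_unif hGcont hGlip hT
  have hXc := xlim_contOn hGcont hGlip
  have hIb : ∀ n, (∫ u in (0:ℝ)..(t+1), |xseq G n u - Xlim G u|) ≤ (t+1) * b n := by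
    intro n
    have h1 : ∀ u ∈ Set.Icc (0:ℝ) (t+1), |xseq G n u - Xlim G u| ≤ b n := by
      intro u hu
      rw [← Real.dist_eq]
      exact hb n u hu
    have hint : IntervalIntegrable (fun u => |xseq G n u - Xlim G u|)
        MeasureTheory.volume 0 (t+1) := by
      apply ContinuousOn.intervalIntegrable
      rw [Set.uIcc_of_le (by linarith : (0:ℝ) ≤ t+1)]
      exact (((xseq_contOn hGcont n).sub hXc).abs).mono Set.Icc_subset_Ici_self
    calc (∫ u in (0:ℝ)..(t+1), |xseq G n u - Xlim G u|)
        ≤ ∫ _ in (0:ℝ)..(t+1), b n :=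
          intervalIntegral.integral_mono_on (by linarith) hint intervalIntegrable_const h1
      _ = (t+1) * b n := by rw [intervalIntegral.integral_const]; simp
  have hGb : ∀ n, ∀ s ∈ Set.Icc (0:ℝ) (t+1),
      |G (xseq G n) s - G (Xlim G) s| ≤ C * ((t+1) * b n) := by
    intro n s hs
    refine le_trans (hC _ _ (xseq_contOn hGcont n) hXc (t+1) (by linarith) le_rfl s hs) ?_
    exact mul_le_mul_of_nonneg_left (hIb n) hC0
  have htb : Filter.Tendsto (fun n => C * ((t+1) * b n)) Filter.atTop (nhds 0) := by
    have := (hb0.const_mul (t+1)).const_mul C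
    simpa using this
  have hGtend : Filter.Tendsto (fun n => G (xseq G n) t) Filter.atTop
      (nhds (G (Xlim G) t)) := by
    rw [tendsto_iff_dist_tendsto_zero]
    apply squeeze_zero (fun n => dist_nonneg) (fun n => ?_) htb
    rw [Real.dist_eq]
    exact hGb n t ⟨ht, by linarith⟩
  have hRtend : Filter.Tendsto (fun n => runSup (G (xseq G n)) t) Filter.atTop
      (nhds (runSup (G (Xlim G)) t)) := by
    rw [tendsto_iff_dist_tendsto_zero]
    apply squeeze_zero (fun n => dist_nonneg) (fun n => ?_) htb
    rw [Real.dist_eq]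
    apply runSup_dist_le (hGcont _ (xseq_contOn hGcont n)) (hGcont _ hXc) ht
    intro u hu
    exact hGb n u ⟨hu.1, hu.2.trans (by linarith)⟩
  have h1 : Filter.Tendsto (fun n => xseq G (n+1) t) Filter.atTop
      (nhds (G (Xlim G) t + runSup (G (Xlim G)) t)) := hGtend.add hRtend
  have h2 : Filter.Tendsto (fun n => xseq G (n+1) t) Filter.atTop (nhds (Xlim G t)) :=
    (xseq_conv hGcont hGlip t ht).comp (Filter.tendsto_add_atTop_nat 1)
  exact tendsto_nhds_unique h2 h1

end existence

theorem generalized_skorokhod_wellposed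
    (G : (ℝ → ℝ) → (ℝ → ℝ))
    (hGcont : ∀ x : ℝ → ℝ, ContinuousOn x (Set.Ici 0) → ContinuousOn (G x) (Set.Ici 0))
    (hG0 : ∀ x : ℝ → ℝ, ContinuousOn x (Set.Ici 0) → 0 ≤ G x 0)
    (hGlip : ∀ T : ℝ, 0 < T → ∃ C : ℝ,
      ∀ x y : ℝ → ℝ, ContinuousOn x (Set.Ici 0) → ContinuousOn y (Set.Ici 0) →
        ∀ t, 0 ≤ t → t ≤ T → ∀ s ∈ Set.Icc (0:ℝ) t,
          |G x s - G y s| ≤ C * ∫ u in (0:ℝ)..t, |x u - y u|) :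
    ∃ X R : ℝ → ℝ, IsGSPSolution G X R ∧
      ∀ X' R' : ℝ → ℝ, IsGSPSolution G X' R' →
        ∀ t, 0 ≤ t → X' t = X t ∧ R' t = R t := by
  have hXc : ContinuousOn (Xlim G) (Set.Ici 0) := xlim_contOn hGcont hGlip
  have hzc : ContinuousOn (G (Xlim G)) (Set.Ici 0) := hGcont _ hXc
  have hz0 : 0 ≤ G (Xlim G) 0 := hG0 _ hXc
  have hfix := xlim_fixed hGcont hGlip
  refine ⟨Xlim G, runSup (G (Xlim G)), sol_congr (sk_isSolution hzc hz0) hfix, ?_⟩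
  intro X' R' hsol' t ht
  have hX'c := hsol'.1
  have hzc' : ContinuousOn (G X') (Set.Ici 0) := hGcont _ hX'c
  have hR' : ∀ s, 0 ≤ s → R' s = runSup (G X') s := fun s hs =>
    skorokhod_unique hzc' hsol' hs
  have hX'eq : ∀ s, 0 ≤ s → X' s = G X' s + runSup (G X') s := by
    intro s hs
    rw [hsol'.2.2.1 s hs, hR' s hs]
  have hT : (0:ℝ) < t + 1 := by linarith
  obtain ⟨C, hC0, hC⟩ := hGlip' hGlip (t+1) hT
  set f : ℝ → ℝ := fun s => |X' s - Xlim G s| with hf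
  have hfc : ContinuousOn f (Set.Icc 0 (t+1)) :=
    ((hX'c.sub hXc).abs).mono Set.Icc_subset_Ici_self
  have hfnn : ∀ s ∈ Set.Icc (0:ℝ) (t+1), 0 ≤ f s := fun s _ => abs_nonneg _
  have hineq : ∀ s ∈ Set.Icc (0:ℝ) (t+1), f s ≤ (2*C) * ∫ u in (0:ℝ)..s, f u := by
    intro s hs
    have hGd : ∀ u ∈ Set.Icc (0:ℝ) s, |G X' u - G (Xlim G) u| ≤ C * ∫ v in (0:ℝ)..s, f v :=
      fun u hu => hC _ _ hX'c hXc s hs.1 hs.2 u hu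
    have hRd : |runSup (G X') s - runSup (G (Xlim G)) s| ≤ C * ∫ v in (0:ℝ)..s, f v :=
      runSup_dist_le hzc' hzc hs.1 hGd
    have hGs := hGd s ⟨hs.1, le_rfl⟩
    have hsplit : X' s - Xlim G s
        = (G X' s - G (Xlim G) s) + (runSup (G X') s - runSup (G (Xlim G)) s) := by
      rw [hX'eq s hs.1, hfix s hs.1]; ring
    show |X' s - Xlim G s| ≤ (2*C) * ∫ u in (0:ℝ)..s, f u
    rw [hsplit]
    calc |_ + _| ≤ |G X' s - G (Xlim G) s|
          + |runSup (G X') s - runSup (G (Xlim G)) s| := abs_add_le _ _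
      _ ≤ (2*C) * ∫ u in (0:ℝ)..s, f u := by rw [two_mul, add_mul]; exact add_le_add hGs hRd
  have hzero := gronwall_zero (le_of_lt hT) (by positivity) hfc hfnn hineq
  have hXeq : ∀ s ∈ Set.Icc (0:ℝ) (t+1), X' s = Xlim G s := by
    intro s hs
    have := hzero s hs
    rw [hf] at this
    simpa [sub_eq_zero] using this
  have hX't : X' t = Xlim G t := hXeq t ⟨ht, by linarith⟩
  refine ⟨hX't, ?_⟩
  -- G X' = G (Xlim G) on [0, t+1]
  have hGeq : ∀ u ∈ Set.Icc (0:ℝ) (t+1), G X' u = G (Xlim G) u := by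
    intro u hu
    have hI0 : (∫ v in (0:ℝ)..(t+1), f v) = 0 := by
      rw [intervalIntegral.integral_congr (g := fun _ => (0:ℝ))
        (fun v hv => by
          rw [Set.uIcc_of_le (by linarith : (0:ℝ) ≤ t+1)] at hv
          exact hzero v hv)]
      simp
    have := hC _ _ hX'c hXc (t+1) (by linarith) le_rfl u hu
    rw [show (∫ v in (0:ℝ)..(t+1), |X' v - Xlim G v|) = ∫ v in (0:ℝ)..(t+1), f v from rfl,
      hI0, mul_zero] at this
    have h0 := abs_nonneg (G X' u - G (Xlim G) u)
    have : |G X' u - G (Xlim G) u| = 0 := le_antisymm this h0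
    rwa [abs_eq_zero, sub_eq_zero] at this
  rw [hR' t ht]
  exact runSup_congr (fun u hu => hGeq u ⟨hu.1, hu.2.trans (by linarith)⟩)
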